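/- Let I be the product over all (n-1)-element subsets {i_1,...,i_{n-1}} of {1,...,n} of the ideals (x_{i_1},...,x_{i_{n-1}}) in k[x_1,...,x_n]. Then I is generated by all monomials of degree n except the pure powers x_1^n,...,x_n^n. -/

import Mathlib

open MvPolynomial Finset

def aux_fiberEquiv {ι : Type*} {β : ι → Type*} (i : ι) :
    {σ : Σ j, β j // σ.1 = i} ≃ β i where
  toFun := fun x => x.2 ▸ x.1.2
  invFun := fun y => ⟨⟨i, y⟩, rfl⟩
  left_inv := by rintro ⟨⟨j, y⟩, rfl⟩; rfl
  right_inv := fun y => rfl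

lemma aux_prod_monomial {K : Type*} [CommSemiring K] {n : ℕ} {ι : Type*} (s : Finset ι)
    (d : ι → (Fin n →₀ ℕ)) :
    (∏ j ∈ s, (monomial (d j) (1:K))) = monomial (∑ j ∈ s, d j) 1 := by
  classical
  induction s using Finset.cons_induction with
  | empty => simp
  | cons j s hj ih => rw [Finset.prod_cons, Finset.sum_cons, ih, monomial_mul, one_mul]

lemma aux_sum_single_apply {n : ℕ} (c : Fin n → Fin n) (i : Fin n) :
    (∑ j, Finsupp.single (c j) 1) i = (univ.filter fun j => c j = i).card := by
  rw [Finset.sum_apply', Finset.card_filter]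
  exact Finset.sum_congr rfl fun j _ => by rw [Finsupp.single_apply]

lemma aux_exists_fun {n : ℕ} (hn : 2 ≤ n) (a : Fin n → ℕ) (hsum : ∑ i, a i = n)
    (hlt : ∀ i, a i < n) :
    ∃ f : Fin n → Fin n, (∀ j, f j ≠ j) ∧
      ∀ i, (univ.filter fun j => f j = i).card = a i := by
  classical
  have hcard : Fintype.card (Σ i : Fin n, Fin (a i)) = Fintype.card (Fin n) := by
    simp [hsum]
  let e := Fintype.equivOfCardEq hcard
  set v : Fin n → Fin n := fun s => (e.symm s).1 with hv
  have hvfib : ∀ i, (univ.filter fun s => v s = i).card = a i := by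
    intro i
    rw [← Fintype.card_subtype, ← Fintype.card_fin (a i)]
    exact Fintype.card_congr ((e.symm.subtypeEquiv fun s => Iff.rfl).trans (aux_fiberEquiv i))
  -- Hall's condition
  have hall : ∀ S : Finset (Fin n), S.card ≤ (S.biUnion fun s => univ.erase (v s)).card := by
    intro S
    rcases S.eq_empty_or_nonempty with rfl | ⟨s₀, hs₀⟩
    · simp
    rcases lt_or_ge S.card n with h | h
    · calc S.card ≤ n - 1 := Nat.le_pred_of_lt h
        _ = (univ.erase (v s₀)).card := by
            simp [Finset.card_erase_of_mem]
        _ ≤ (S.biUnion fun s => univ.erase (v s)).card :=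
            Finset.card_le_card (Finset.subset_biUnion_of_mem (fun s => univ.erase (v s)) hs₀)
    · have hSn : S.card = n := le_antisymm (by simpa using Finset.card_le_univ S) h
      have hSu : S = univ := Finset.eq_univ_of_card S (by rw [Fintype.card_fin]; exact hSn)
      have : (S.biUnion fun s => univ.erase (v s)) = univ := by
        rw [Finset.eq_univ_iff_forall]
        intro p
        rw [Finset.mem_biUnion]
        by_contra hcon
        push_neg at hcon
        have hall_eq : ∀ s : Fin n, v s = p := by
          intro s
          have := hcon s (hSu ▸ Finset.mem_univ s)
          simp [Finset.mem_erase] at this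
          exact this.symm
        have h1 := hvfib p
        rw [Finset.filter_true_of_mem (fun s _ => hall_eq s)] at h1
        simp only [Finset.card_univ, Fintype.card_fin] at h1
        have h2 := hlt p
        omega
      rw [this]
      simpa using Finset.card_le_univ S
  obtain ⟨g, hginj, hgmem⟩ :=
    (Finset.all_card_le_biUnion_card_iff_exists_injective fun s => univ.erase (v s)).mp hall
  have hgbij : Function.Bijective g := Finite.injective_iff_bijective.mp hginj
  let σ := Equiv.ofBijective g hgbij
  refine ⟨fun j => v (σ.symm j), fun j => ?_, fun i => ?_⟩
  · have h1 : g (σ.symm j) = j := σ.apply_symm_apply j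
    have h2 := hgmem (σ.symm j)
    rw [Finset.mem_erase, h1] at h2
    exact fun hcc => h2.1 hcc.symm
  · rw [← hvfib i]
    apply Finset.card_nbij' (fun j => σ.symm j) (fun s => σ s)
    · intro j hj
      simp only [Finset.mem_coe, Finset.mem_filter, Finset.mem_univ, true_and] at hj ⊢
      exact hj
    · intro s hs
      simp only [Finset.mem_coe, Finset.mem_filter, Finset.mem_univ, true_and] at hs ⊢
      rw [σ.symm_apply_apply]
      exact hs
    · intro j _; exact σ.apply_symm_apply j
    · intro s _; exact σ.symm_apply_apply s

theorem stmt_13 (K : Type*) [Field K] (n : ℕ) (hn : 2 ≤ n) :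
    (∏ s ∈ Finset.univ.filter (fun s : Finset (Fin n) => s.card = n - 1),
        Ideal.span ((fun i => (X i : MvPolynomial (Fin n) K)) '' (s : Set (Fin n)))) =
      Ideal.span {f : MvPolynomial (Fin n) K |
        ∃ a : Fin n →₀ ℕ, (∑ i, a i = n) ∧ (∀ i, a i ≠ n) ∧ f = monomial a 1} := by
  classical
  have key : (∏ s ∈ Finset.univ.filter (fun s : Finset (Fin n) => s.card = n - 1),
        Ideal.span ((fun i => (X i : MvPolynomial (Fin n) K)) '' (s : Set (Fin n)))) =
      ∏ j : Fin n, Ideal.span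
        ((fun i => (X i : MvPolynomial (Fin n) K)) '' ((univ.erase j : Finset (Fin n)) : Set (Fin n))) := by
    refine (Finset.prod_nbij (fun j => univ.erase j) ?_ ?_ ?_ ?_).symm
    · intro j _
      simp [Finset.card_erase_of_mem]
    · intro j _ j' _ h
      by_contra hne
      have h' : univ.erase j = univ.erase j' := h
      have : j' ∈ univ.erase j := Finset.mem_erase.mpr ⟨fun hc => hne hc.symm, Finset.mem_univ _⟩
      rw [h'] at this
      exact (Finset.mem_erase.mp this).1 rfl
    · intro s hs
      simp only [Finset.coe_filter, Set.mem_setOf_eq, Finset.mem_univ, true_and] at hs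
      have hc : sᶜ.card = 1 := by
        rw [Finset.card_compl, hs]
        simp
        omega
      obtain ⟨j, hj⟩ := Finset.card_eq_one.mp hc
      refine ⟨j, by simp, ?_⟩
      have : univ.erase j = ({j} : Finset (Fin n))ᶜ := by
        ext x; simp [Finset.mem_erase, eq_comm]
      show univ.erase j = s
      rw [this, ← hj, compl_compl]
    · intro j _; rfl
  rw [key]
  apply le_antisymm
  · rw [Ideal.prod_span]
    rw [Ideal.span_le]
    intro p hp
    rw [Set.mem_finset_prod] at hp
    obtain ⟨g, hg, rfl⟩ := hp
    have hch : ∀ j : Fin n, ∃ c : Fin n, c ≠ j ∧ g j = X c := by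
      intro j
      obtain ⟨c, hc, h⟩ := hg (Finset.mem_univ j)
      refine ⟨c, ?_, h.symm⟩
      have := Finset.mem_coe.mp hc
      exact (Finset.mem_erase.mp this).1
    choose c hc hgc using hch
    have hprod : ∏ j, g j = monomial (∑ j, Finsupp.single (c j) 1) (1 : K) := by
      rw [Finset.prod_congr rfl fun j _ => hgc j]
      simp only [X]
      exact aux_prod_monomial _ _
    rw [hprod]
    apply Ideal.subset_span
    refine ⟨∑ j, Finsupp.single (c j) 1, ?_, ?_, rfl⟩
    · have : ∀ i : Fin n, (∑ j, Finsupp.single (c j) (1:ℕ)) i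
          = (univ.filter fun j => c j = i).card := fun i => aux_sum_single_apply c i
      calc ∑ i, (∑ j, Finsupp.single (c j) (1:ℕ)) i
          = ∑ i, ∑ j, (Finsupp.single (c j) (1:ℕ)) i := by
            exact Finset.sum_congr rfl fun i _ => Finset.sum_apply' i
        _ = ∑ j, ∑ i, (Finsupp.single (c j) (1:ℕ)) i := Finset.sum_comm
        _ = ∑ j : Fin n, 1 := by
            refine Finset.sum_congr rfl fun j _ => ?_
            simp [Finsupp.single_apply]
        _ = n := by simp
    · intro i
      rw [aux_sum_single_apply]
      have hsub : (univ.filter fun j => c j = i) ⊆ univ.erase i := by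
        intro j hj
        rw [Finset.mem_filter] at hj
        rw [Finset.mem_erase]
        refine ⟨fun hji => hc j ?_, Finset.mem_univ _⟩
        rw [hj.2]
        exact hji.symm
      have := Finset.card_le_card hsub
      rw [Finset.card_erase_of_mem (Finset.mem_univ _)] at this
      simp only [Finset.card_univ, Fintype.card_fin] at this
      omega
  · rw [Ideal.span_le]
    rintro p ⟨a, hsum, hne, rfl⟩
    have hlt : ∀ i, a i < n := by
      intro i
      have : a i ≤ ∑ j, a j := Finset.single_le_sum (fun j _ => Nat.zero_le _) (Finset.mem_univ i)
      rw [hsum] at this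
      exact lt_of_le_of_ne this (hne i)
    obtain ⟨f, hf1, hf2⟩ := aux_exists_fun hn (fun i => a i) hsum hlt
    have heq : (monomial a 1 : MvPolynomial (Fin n) K) = ∏ j, X (f j) := by
      have : (∏ j, (X (f j) : MvPolynomial (Fin n) K))
          = monomial (∑ j, Finsupp.single (f j) 1) 1 := by
        simp only [X]
        exact aux_prod_monomial _ _
      have hba : (∑ j, Finsupp.single (f j) 1) = a :=
        Finsupp.ext fun i => by rw [aux_sum_single_apply]; exact hf2 i
      rw [this, hba]
    rw [heq]
    apply Ideal.prod_mem_prod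
    intro j _
    apply Ideal.subset_span
    exact ⟨f j, by simp [Finset.mem_erase, hf1 j], rfl⟩
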